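/- For every m ≥ 1, 2·( ((A^(m−1)).mulVec ![0,0,1]) 1 + ((A^(m−1)).mulVec ![0,0,1]) 2 ) + ((B^(m−1)).mulVec ![0,1,0,0]) 3 = 2^m + ε'(m), where ε'(m) = −1 if m ≡ 0 (mod 3) and ε'(m) = 0 otherwise. -/

import Mathlib

def A : Matrix (Fin 3) (Fin 3) ℤ := !![0, 1, 0; 0, 0, 1; 2, 1, 1]

def B : Matrix (Fin 4) (Fin 4) ℤ :=
  !![0, 0, 0, 1; 0, 1, 1, 0; 2, 1, 0, 0; 0, 0, 1, 1]

lemma key (n : ℕ) :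
    7 * ((A ^ n).mulVec ![0, 0, 1]) 0 =
      2 ^ n + (if n % 3 = 0 then -1 else if n % 3 = 1 then -2 else 3) ∧
    7 * ((A ^ n).mulVec ![0, 0, 1]) 1 =
      2 * 2 ^ n + (if n % 3 = 0 then -2 else if n % 3 = 1 then 3 else -1) ∧
    7 * ((A ^ n).mulVec ![0, 0, 1]) 2 =
      4 * 2 ^ n + (if n % 3 = 0 then 3 else if n % 3 = 1 then -1 else -2) ∧
    7 * ((B ^ n).mulVec ![0, 1, 0, 0]) 0 =
      2 ^ n + (if n % 3 = 0 then -1 else if n % 3 = 1 then -2 else -4) ∧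
    7 * ((B ^ n).mulVec ![0, 1, 0, 0]) 1 =
      2 * 2 ^ n + (if n % 3 = 0 then 5 else if n % 3 = 1 then 3 else 6) ∧
    7 * ((B ^ n).mulVec ![0, 1, 0, 0]) 2 =
      2 * 2 ^ n + (if n % 3 = 0 then -2 else if n % 3 = 1 then 3 else -1) ∧
    7 * ((B ^ n).mulVec ![0, 1, 0, 0]) 3 =
      2 * 2 ^ n + (if n % 3 = 0 then -2 else if n % 3 = 1 then -4 else -1) := by
  induction n with
  | zero => norm_num [Matrix.mulVec, dotProduct, Fin.sum_univ_three, Fin.sum_univ_four, Matrix.one_apply] <;> decide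
  | succ n ih =>
    obtain ⟨h0, h1, h2, g0, g1, g2, g3⟩ := ih
    have hA : (A ^ (n + 1)).mulVec ![0, 0, 1] =
        A.mulVec ((A ^ n).mulVec ![0, 0, 1]) := by
      rw [Matrix.mulVec_mulVec, ← pow_succ']
    have hB : (B ^ (n + 1)).mulVec ![0, 1, 0, 0] =
        B.mulVec ((B ^ n).mulVec ![0, 1, 0, 0]) := by
      rw [Matrix.mulVec_mulVec, ← pow_succ']
    set u := (A ^ n).mulVec ![0, 0, 1] with hu
    set v := (B ^ n).mulVec ![0, 1, 0, 0] with hv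
    have eA0 : ((A ^ (n + 1)).mulVec ![0, 0, 1]) 0 = u 1 := by
      rw [hA]; simp [A, Matrix.mulVec, dotProduct, Fin.sum_univ_three]
    have eA1 : ((A ^ (n + 1)).mulVec ![0, 0, 1]) 1 = u 2 := by
      rw [hA]; simp [A, Matrix.mulVec, dotProduct, Fin.sum_univ_three]
    have eA2 : ((A ^ (n + 1)).mulVec ![0, 0, 1]) 2 = 2 * u 0 + u 1 + u 2 := by
      rw [hA]; simp [A, Matrix.mulVec, dotProduct, Fin.sum_univ_three]
    have eB0 : ((B ^ (n + 1)).mulVec ![0, 1, 0, 0]) 0 = v 3 := by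
      rw [hB]; simp [B, Matrix.mulVec, dotProduct, Fin.sum_univ_four]
    have eB1 : ((B ^ (n + 1)).mulVec ![0, 1, 0, 0]) 1 = v 1 + v 2 := by
      rw [hB]; simp [B, Matrix.mulVec, dotProduct, Fin.sum_univ_four]
    have eB2 : ((B ^ (n + 1)).mulVec ![0, 1, 0, 0]) 2 = 2 * v 0 + v 1 := by
      rw [hB]; simp [B, Matrix.mulVec, dotProduct, Fin.sum_univ_four]
    have eB3 : ((B ^ (n + 1)).mulVec ![0, 1, 0, 0]) 3 = v 2 + v 3 := by
      rw [hB]; simp [B, Matrix.mulVec, dotProduct, Fin.sum_univ_four]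
    rw [eA0, eA1, eA2, eB0, eB1, eB2, eB3, pow_succ]
    have h3 : n % 3 = 0 ∨ n % 3 = 1 ∨ n % 3 = 2 := by omega
    rcases h3 with h | h | h <;>
      · have h' : (n + 1) % 3 = (n % 3 + 1) % 3 := by omega
        simp only [h', h] at *
        norm_num at *
        refine ⟨by linarith, by linarith, by linarith, by linarith, by linarith,
          by linarith, by linarith⟩

theorem total_count_c1_easy (m : ℕ) (hm : 1 ≤ m) :
    2 * (((A ^ (m - 1)).mulVec ![0, 0, 1]) 1 + ((A ^ (m - 1)).mulVec ![0, 0, 1]) 2) +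
        ((B ^ (m - 1)).mulVec ![0, 1, 0, 0]) 3 =
      2 ^ m + (if m % 3 = 0 then -1 else 0) := by
  obtain ⟨n, rfl⟩ : ∃ n, m = n + 1 := ⟨m - 1, by omega⟩
  obtain ⟨h0, h1, h2, g0, g1, g2, g3⟩ := key n
  simp only [Nat.add_sub_cancel] at *
  have hpow : (2 : ℤ) ^ (n + 1) = 2 * 2 ^ n := by ring
  have h3 : n % 3 = 0 ∨ n % 3 = 1 ∨ n % 3 = 2 := by omega
  rcases h3 with h | h | h <;>
    · have h' : (n + 1) % 3 = (n % 3 + 1) % 3 := by omega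
      simp only [h', h, hpow] at *
      norm_num at *
      linarith
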